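/- Let n ≥ 1 and let X be a subshift of symbolic rank n. Then the following are equivalent: (1) there exists a rank-n word V such that X = X_V and V has a proper rank-n construction; (2) for every rank-n word V such that X = X_V, V has a proper rank-n construction; (3) for every x ∈ X with x ≠ 1^ℤ (the constantly-1 bi-infinite sequence), the σ-orbit of x is dense in X. -/

import Mathlib

namespace SubshiftRank

/-! ### Words over the alphabet {0,1}; `false` plays the role of `0`, `true` of `1`. -/

abbrev Word := List Bool

/-- `ℱ`: the set of finite nonempty words over `{0,1}` beginning and ending with `0`. -/
def FF : Set Word := {w | w ≠ [] ∧ w.head? = some false ∧ w.getLast? = some false}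

/-- `spacer s = 1^s`. -/
def spacer (s : ℕ) : Word := List.replicate s true

/-- A building: a sequence of words `v₁, …, v_k` with spacers `s₁, …, s_k` (the `pairs`),
followed by a final word `v_{k+1}` (the `last`).  The assembled word is
`v₁1^{s₁}v₂1^{s₂}⋯v_k1^{s_k}v_{k+1}`. -/
structure Building where
  pairs : List (Word × ℕ)
  last : Word

/-- The word assembled by a building. -/
def Building.word (b : Building) : Word :=
  b.pairs.foldr (fun p acc => p.1 ++ spacer p.2 ++ acc) b.last

/-- The words `v₁, …, v_{k+1}` used in a building (in order). -/
def Building.pieces (b : Building) : List Word := b.pairs.map Prod.fst ++ [b.last]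

/-- `b` is a building from the set `S`: there is at least one spacer (i.e. `k ≥ 1`, at least
two pieces) and all the pieces belong to `S`. -/
def Building.FromSet (b : Building) (S : Set Word) : Prop :=
  b.pairs ≠ [] ∧ ∀ v ∈ b.pieces, v ∈ S

/-- The first word of a building. -/
def Building.firstPiece (b : Building) : Word := b.pieces.headI

/-- Every word of `S` is used in the building. -/
def Building.UsesAll (b : Building) (S : Set Word) : Prop := ∀ v ∈ S, v ∈ b.pieces

/-- The spacer parameter of the building is bounded by `M`. -/
def Building.SpacersLE (b : Building) (M : ℕ) : Prop := ∀ p ∈ b.pairs, p.2 ≤ M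

/-- `w` is built from `S`. -/
def BuiltFrom (w : Word) (S : Set Word) : Prop := ∃ b : Building, b.FromSet S ∧ b.word = w

/-- The `i`-th level `S_i = {v_{i,1}, …, v_{i,n_i}}` of a generating sequence. -/
def levelSet (ni : ℕ → ℕ) (wd : ℕ → ℕ → Word) (i : ℕ) : Set Word :=
  {w | ∃ j, 1 ≤ j ∧ j ≤ ni i ∧ wd i j = w}

/-- A (symbolic) rank-`n` construction: a rank-`n` generating sequence `v_{i,j}`
(`i ≥ 0`, `1 ≤ j ≤ n_i ≤ n`) together with, for each `i` and `1 ≤ j ≤ n_{i+1}`, one chosen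
building of `v_{i+1,j}` from `S_i`, the building of `v_{i+1,1}` starting with `v_{i,1}`. -/
structure RankConstruction (n : ℕ) where
  ni : ℕ → ℕ
  wd : ℕ → ℕ → Word
  bld : ℕ → ℕ → Building
  ni_pos : ∀ i, 1 ≤ ni i
  ni_le : ∀ i, ni i ≤ n
  mem_FF : ∀ i j, 1 ≤ j → j ≤ ni i → wd i j ∈ FF
  wd_zero : ∀ j, 1 ≤ j → j ≤ ni 0 → wd 0 j = [false]
  bld_from : ∀ i j, 1 ≤ j → j ≤ ni (i + 1) → (bld i j).FromSet (levelSet ni wd i)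
  bld_word : ∀ i j, 1 ≤ j → j ≤ ni (i + 1) → (bld i j).word = wd (i + 1) j
  bld_start : ∀ i, (bld i 1).firstPiece = wd i 1

/-- A rank-`n` construction is proper if `n_i = n` for all `i` and every word of `S_i` is used
in each chosen building. -/
def RankConstruction.Proper {n : ℕ} (c : RankConstruction n) : Prop :=
  (∀ i, c.ni i = n) ∧
    ∀ i j, 1 ≤ j → j ≤ c.ni (i + 1) → (c.bld i j).UsesAll (levelSet c.ni c.wd i)

/-- All spacer parameters of all chosen buildings are bounded by `M`. -/
def RankConstruction.SpacersBoundedBy {n : ℕ} (c : RankConstruction n) (M : ℕ) : Prop :=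
  ∀ i j, 1 ≤ j → j ≤ c.ni (i + 1) → (c.bld i j).SpacersLE M

/-- The spacer parameter of the construction is bounded. -/
def RankConstruction.BoundedSpacer {n : ℕ} (c : RankConstruction n) : Prop :=
  ∃ M, c.SpacersBoundedBy M

/-- `w` is of the form `α1^{s₁}v_{j₁}1^{s₂}v_{j₂}⋯v_{j_{k−1}}1^{s_k}β` where `k ≥ 1`, the
middle words belong to `S`, `α` is a nonempty suffix of a word of `S` and `β` is a nonempty
prefix of a word of `S`. -/
def BadDecomp (w : Word) (S : Set Word) : Prop :=
  ∃ (α β : Word) (mids : List (ℕ × Word)) (sk : ℕ),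
    α ≠ [] ∧ β ≠ [] ∧ (∃ a ∈ S, α <:+ a) ∧ (∃ b ∈ S, β <+: b) ∧
    (∀ p ∈ mids, p.2 ∈ S) ∧
    w = α ++ mids.foldr (fun p acc => spacer p.1 ++ p.2 ++ acc) (spacer sk ++ β)

/-- A rank-`n` construction is good if it is proper and no `v_{i,j}` has a bad decomposition
over `S_i`. -/
def RankConstruction.Good {n : ℕ} (c : RankConstruction n) : Prop :=
  c.Proper ∧ ∀ i j, 1 ≤ j → j ≤ c.ni i → ¬ BadDecomp (c.wd i j) (levelSet c.ni c.wd i)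

/-- The finite word `w` is a prefix (initial segment) of the infinite word `V`. -/
def InfExtends (V : ℕ → Bool) (w : Word) : Prop := ∀ k, k < w.length → w.getD k false = V k

/-- `V = lim_i v_{i,1}` is the infinite word determined by the construction. -/
def RankConstruction.HasLimit {n : ℕ} (c : RankConstruction n) (V : ℕ → Bool) : Prop :=
  (∀ i, InfExtends V (c.wd i 1)) ∧ ∀ m : ℕ, ∃ i, m ≤ (c.wd i 1).length

/-- The infinite word `V` has a rank-`n` construction. -/
def HasRankConstr (V : ℕ → Bool) (n : ℕ) : Prop := ∃ c : RankConstruction n, c.HasLimit V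

/-! ### Occurrences and subshifts -/

/-- The finite word `u` occurs in the infinite word `V` at position `p`. -/
def OccursAtInf (u : Word) (V : ℕ → Bool) (p : ℕ) : Prop :=
  ∀ k, k < u.length → u.getD k false = V (p + k)

/-- `u` is a subword of the infinite word `V`. -/
def OccursInInf (u : Word) (V : ℕ → Bool) : Prop := ∃ p, OccursAtInf u V p

/-- The finite word `u` occurs in the bi-infinite word `x` at position `p`. -/
def OccursAtBi (u : Word) (x : ℤ → Bool) (p : ℤ) : Prop :=
  ∀ k : ℕ, k < u.length → u.getD k false = x (p + (k : ℤ))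

/-- `u` is a subword of the bi-infinite word `x`. -/
def OccursInBi (u : Word) (x : ℤ → Bool) : Prop := ∃ p, OccursAtBi u x p

/-- The Bernoulli shift `σ` on `{0,1}^ℤ`. -/
def shift (x : ℤ → Bool) : ℤ → Bool := fun k => x (k + 1)

/-- The subshift generated by the infinite word `V`. -/
def XV (V : ℕ → Bool) : Set (ℤ → Bool) := {x | ∀ u : Word, OccursInBi u x → OccursInInf u V}

/-- The `σ`-orbit of `x`. -/
def sorbit (x : ℤ → Bool) : Set (ℤ → Bool) := Set.range fun n : ℤ => fun k => x (k + n)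

/-- A subshift: a nonempty closed shift-invariant subset of `{0,1}^ℤ`. -/
def IsSubshift (X : Set (ℤ → Bool)) : Prop := X.Nonempty ∧ IsClosed X ∧ shift '' X = X

/-- A minimal subshift: every orbit is dense. -/
def MinimalSubshift (X : Set (ℤ → Bool)) : Prop :=
  IsSubshift X ∧ ∀ x ∈ X, X ⊆ closure (sorbit x)

/-- `X` has symbolic rank at most `n`. -/
def SymbRankLE (X : Set (ℤ → Bool)) (n : ℕ) : Prop := ∃ V, HasRankConstr V n ∧ X = XV V

/-- `X` has symbolic rank exactly `n`. -/
def SymbRankEq (X : Set (ℤ → Bool)) (n : ℕ) : Prop :=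
  SymbRankLE X n ∧ ∀ m, SymbRankLE X m → n ≤ m

/-- `M` is a minimal subset of the system `(X, shift)`: a nonempty closed shift-invariant
subset of `X` with no proper nonempty closed shift-invariant subset. -/
def IsMinimalSubsetOf (X M : Set (ℤ → Bool)) : Prop :=
  M.Nonempty ∧ IsClosed M ∧ M ⊆ X ∧ shift '' M = M ∧
    ∀ M', M' ⊆ M → M'.Nonempty → IsClosed M' → shift '' M' = M' → M' = M

/-- A bi-infinite word `x` is built from `v`: there is a strictly increasing bi-infinite
sequence of positions, with consecutive gaps at least `|v|` and unbounded in both directions,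
at each of which `v` occurs, and `x` equals `1` outside those occurrences. -/
def BiBuiltFrom (x : ℤ → Bool) (v : Word) : Prop :=
  ∃ pos : ℤ → ℤ, StrictMono pos ∧
    (∀ i : ℤ, pos i + (v.length : ℤ) ≤ pos (i + 1)) ∧
    (∀ n : ℤ, ∃ i : ℤ, n < pos i) ∧ (∀ n : ℤ, ∃ i : ℤ, pos i < n) ∧
    (∀ i : ℤ, OccursAtBi v x (pos i)) ∧
    (∀ p : ℤ, (∀ i : ℤ, ¬ (pos i ≤ p ∧ p < pos i + (v.length : ℤ))) → x p = true)

/-! ### General topological dynamics on (Cantor) metric spaces -/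

/-- Every orbit of `T` is dense. -/
def MinimalHomeo {X : Type*} [TopologicalSpace X] (T : X ≃ₜ X) : Prop :=
  ∀ x : X, Dense (Set.range fun n : ℤ => (T.toEquiv ^ n) x)

/-- The system `(X, T)` is equicontinuous. -/
def EquicontinuousSys {X : Type*} [MetricSpace X] (T : X ≃ₜ X) : Prop :=
  ∀ ε : ℝ, 0 < ε → ∃ δ : ℝ, 0 < δ ∧
    ∀ (n : ℤ) (x y : X), dist x y < δ → dist ((T.toEquiv ^ n) x) ((T.toEquiv ^ n) y) < ε

/-- `M` is a minimal set of `(X, T)`. -/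
def IsMinimalSet {X : Type*} [TopologicalSpace X] (T : X → X) (M : Set X) : Prop :=
  M.Nonempty ∧ IsClosed M ∧ T '' M = M ∧
    ∀ M', M' ⊆ M → M'.Nonempty → IsClosed M' → T '' M' = M' → M' = M

/-- `(X, T)` is essentially minimal: it has a unique minimal set. -/
def EssentiallyMinimal {X : Type*} [TopologicalSpace X] (T : X → X) : Prop :=
  ∃! M, IsMinimalSet T M

/-- `A` has the finite covering property: `⋃_{−N ≤ n ≤ N} T^n A = X` for some `N`. -/
def FiniteCovering {X : Type*} [TopologicalSpace X] (T : X ≃ₜ X) (A : Set X) : Prop :=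
  ∃ N : ℕ, (⋃ n ∈ Finset.Icc (-(N : ℤ)) (N : ℤ), ⇑(T.toEquiv ^ n) '' A) = Set.univ

/-- A finite partition of the whole space into clopen sets. -/
def IsClopenPartition {X : Type*} [TopologicalSpace X] (Q : Finset (Set X)) : Prop :=
  (∀ q ∈ Q, IsClopen q) ∧ (⋃ q ∈ Q, q) = Set.univ ∧
    ∀ q ∈ Q, ∀ q' ∈ Q, q ≠ q' → Disjoint q q'

/-- A Kakutani–Rohlin partition of `(X, T)`: clopen bases `B 0, …, B (d−1)` with heights
`h 0, …, h (d−1)` such that the sets `T^j (B k)` (`j < h k`) form a partition of `X` and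
`⋃_k T^{h k} (B k) = ⋃_k B k`. -/
structure KRPart {X : Type*} [TopologicalSpace X] (T : X → X) where
  d : ℕ
  B : Fin d → Set X
  h : Fin d → ℕ
  d_pos : 0 < d
  h_pos : ∀ k, 0 < h k
  clopen : ∀ k, IsClopen (B k)
  disj : ∀ (k k' : Fin d) (j j' : ℕ), j < h k → j' < h k' → (k, j) ≠ (k', j') →
    Disjoint (T^[j] '' B k) (T^[j'] '' B k')
  cover : (⋃ k, ⋃ j ∈ Finset.range (h k), T^[j] '' B k) = Set.univ
  base_eq : (⋃ k, T^[h k] '' B k) = ⋃ k, B k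

/-- The base of a Kakutani–Rohlin partition. -/
def KRPart.base {X : Type*} [TopologicalSpace X] {T : X → X} (P : KRPart T) : Set X :=
  ⋃ k, P.B k

/-- `(X, T)` has topological rank at most `m` (Kakutani–Rohlin characterization). -/
def TopRankLEGen {X : Type*} [MetricSpace X] (T : X → X) (m : ℕ) : Prop :=
  ∃ x : X, ∀ ε : ℝ, 0 < ε → ∃ P : KRPart T, P.d ≤ m ∧
    (∀ (k : Fin P.d) (j : ℕ), j < P.h k → Metric.diam (T^[j] '' P.B k) < ε) ∧
    Metric.diam P.base < ε ∧ x ∈ P.base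

/-! ### Kakutani–Rohlin partitions and topological rank for subshifts -/

/-- A Kakutani–Rohlin partition of the subshift `(X, σ)`. -/
structure KRPartOn (X : Set (ℤ → Bool)) where
  d : ℕ
  B : Fin d → Set (ℤ → Bool)
  h : Fin d → ℕ
  d_pos : 0 < d
  h_pos : ∀ k, 0 < h k
  subset : ∀ k, B k ⊆ X
  clopen : ∀ k, IsClopen {y : X | (y : ℤ → Bool) ∈ B k}
  disj : ∀ (k k' : Fin d) (j j' : ℕ), j < h k → j' < h k' → (k, j) ≠ (k', j') →
    Disjoint (shift^[j] '' B k) (shift^[j'] '' B k')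
  cover : (⋃ k, ⋃ j ∈ Finset.range (h k), shift^[j] '' B k) = X
  base_eq : (⋃ k, shift^[h k] '' B k) = ⋃ k, B k

/-- The base of a Kakutani–Rohlin partition of a subshift. -/
def KRPartOn.base {X : Set (ℤ → Bool)} (P : KRPartOn X) : Set (ℤ → Bool) := ⋃ k, P.B k

/-- All elements of `A` agree on the window `[−N, N]`; for the canonical metric on `2^ℤ`
this says exactly that `diam(A) ≤ 2^{−N}`. -/
def AgreeOn (N : ℕ) (A : Set (ℤ → Bool)) : Prop :=
  ∀ y ∈ A, ∀ z ∈ A, ∀ k : ℤ, |k| ≤ (N : ℤ) → y k = z k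

/-- The subshift `(X, σ)` has topological rank at most `m` (Kakutani–Rohlin
characterization, with smallness of diameters expressed by agreement on windows,
matching the canonical compatible metric on `2^ℤ`). -/
def TopRankLE (X : Set (ℤ → Bool)) (m : ℕ) : Prop :=
  ∃ x ∈ X, ∀ N : ℕ, ∃ P : KRPartOn X, P.d ≤ m ∧
    (∀ (k : Fin P.d) (j : ℕ), j < P.h k → AgreeOn N (shift^[j] '' P.B k)) ∧
    AgreeOn N P.base ∧ x ∈ P.base

/-! ### Factor maps and conjugacy -/

/-- `φ` is a (topological) factor map from the subshift `Y` onto the subshift `X`. -/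
def IsFactorMapOn (Y X : Set (ℤ → Bool)) (φ : (ℤ → Bool) → (ℤ → Bool)) : Prop :=
  ContinuousOn φ Y ∧ φ '' Y = X ∧ ∀ y ∈ Y, φ (shift y) = shift (φ y)

/-- `X` is a topological factor of `Y`. -/
def SubshiftFactor (Y X : Set (ℤ → Bool)) : Prop := ∃ φ, IsFactorMapOn Y X φ

/-- The subshifts `Y` and `X` are conjugate. -/
def SubshiftConjugate (Y X : Set (ℤ → Bool)) : Prop :=
  ∃ φ, IsFactorMapOn Y X φ ∧ Set.InjOn φ Y

/-- `(X, T)` is conjugate to the subshift `(Y, σ)`. -/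
def ConjugateToSubshift {X : Type*} [TopologicalSpace X] (T : X ≃ₜ X) (Y : Set (ℤ → Bool)) :
    Prop :=
  ∃ φ : X → (ℤ → Bool), Continuous φ ∧ Function.Injective φ ∧ Set.range φ = Y ∧
    ∀ x, φ (T x) = shift (φ x)

/-- The Boolean algebra of sets generated by `G`. -/
inductive GenBoolAlg {X : Type*} (G : Set (Set X)) : Set X → Prop
  | basic (A : Set X) : A ∈ G → GenBoolAlg G A
  | empty : GenBoolAlg G ∅
  | compl (A : Set X) : GenBoolAlg G A → GenBoolAlg G Aᶜ
  | union (A B : Set X) : GenBoolAlg G A → GenBoolAlg G B → GenBoolAlg G (A ∪ B)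

/-- `(T, A)` is generating: the smallest Boolean algebra containing all `T^n A` contains
every clopen set. -/
def Generating {X : Type*} [TopologicalSpace X] (T : X ≃ₜ X) (A : Set X) : Prop :=
  ∀ U : Set X, IsClopen U → GenBoolAlg {B : Set X | ∃ n : ℤ, B = ⇑(T.toEquiv ^ n) '' A} U

/-- The return-times word `Ret_A(x₀) ∈ 2^ℤ` of `x₀` to `A`. -/
noncomputable def retWord {X : Type*} [TopologicalSpace X] (T : X ≃ₜ X) (A : Set X) (x₀ : X) : ℤ → Bool :=
  fun n => @ite _ ((T.toEquiv ^ n) x₀ ∈ A) (Classical.propDecidable _) true false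

/-! ### Auxiliary lemmas -/

section Aux
open List

lemma headI_mem' {α : Type*} [Inhabited α] {l : List α} (h : l ≠ []) : l.headI ∈ l := by
  cases l with
  | nil => exact absurd rfl h
  | cons a t => simp

lemma pieces_ne_nil (b : Building) : b.pieces ≠ [] := by
  simp [Building.pieces]

lemma firstPiece_mem (b : Building) : b.firstPiece ∈ b.pieces :=
  headI_mem' (pieces_ne_nil b)

lemma lastPiece_mem (b : Building) : b.last ∈ b.pieces := by
  simp [Building.pieces]

lemma spacer_getD {s t : ℕ} (ht : t < s) : (spacer s).getD t false = true := by
  rw [List.getD_eq_getElem _ _ (by simpa [spacer] using ht)]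
  simp [spacer]

@[simp] lemma spacer_length (s : ℕ) : (spacer s).length = s := by simp [spacer]

/-- getD of the middle part of an append. -/
lemma getD_middle (l₁ v l₂ : Word) {t : ℕ} (ht : t < v.length) :
    (l₁ ++ (v ++ l₂)).getD (l₁.length + t) false = v.getD t false := by
  rw [List.getD_append_right _ _ _ _ (by omega)]
  simp only [Nat.add_sub_cancel_left]
  rw [List.getD_append _ _ _ _ ht]

/-- FF facts -/
lemma FF_ne_nil {w : Word} (h : w ∈ FF) : w ≠ [] := h.1

lemma FF_length_pos {w : Word} (h : w ∈ FF) : 1 ≤ w.length :=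
  List.length_pos_iff.mpr h.1

lemma FF_getD_zero {w : Word} (h : w ∈ FF) : w.getD 0 false = false := by
  obtain ⟨hne, hh, -⟩ := h
  cases w with
  | nil => exact absurd rfl hne
  | cons a t => simp_all

lemma FF_getD_last {w : Word} (h : w ∈ FF) : w.getD (w.length - 1) false = false := by
  obtain ⟨hne, -, hl⟩ := h
  rw [List.getLast?_eq_getLast hne, Option.some_inj] at hl
  rw [List.getD_eq_getElem _ _ (by have := List.length_pos_iff.mpr hne; omega)]
  rw [← List.getLast_eq_getElem hne, hl]

lemma single_false_mem_FF : [false] ∈ FF := by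
  refine ⟨by simp, by simp, by simp⟩

/-! ### Occurrences -/

lemma infExtends_of_prefix {V : ℕ → Bool} {u w : Word} (hw : InfExtends V w) (h : u <+: w) :
    InfExtends V u := fun k hk => by
  rw [List.getD_eq_getElem _ _ hk, h.getElem hk, ← List.getD_eq_getElem _ _ (lt_of_lt_of_le hk h.length_le)]
  exact hw k (lt_of_lt_of_le hk h.length_le)

lemma occursInInf_of_infix {V : ℕ → Bool} {u w : Word} (h : u <:+: w) (hw : InfExtends V w) :
    OccursInInf u V := by
  obtain ⟨s, t, rfl⟩ := h
  refine ⟨s.length, fun k hk => ?_⟩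
  have hlen : s.length + k < (s ++ u ++ t).length := by simp; omega
  rw [← hw _ hlen, List.append_assoc, getD_middle _ _ _ hk]

lemma infix_of_occursAtInf {V : ℕ → Bool} {u w : Word} {p : ℕ} (h : OccursAtInf u V p)
    (hw : InfExtends V w) (hlen : p + u.length ≤ w.length) : u <:+: w := by
  have hu : u = (w.drop p).take u.length := by
    refine List.ext_getElem (by simp; omega) (fun t h₁ h₂ => ?_)
    rw [List.getElem_take, List.getElem_drop]
    rw [← List.getD_eq_getElem u false h₁, ← List.getD_eq_getElem w false (by omega)]
    rw [h t h₁, hw _ (by omega)]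
  rw [hu]
  exact ((w.drop p).take_prefix u.length).isInfix.trans (w.drop_suffix p).isInfix

lemma occursInInf_trans {V : ℕ → Bool} {u v : Word} (h : u <:+: v) (hv : OccursInInf v V) :
    OccursInInf u V := by
  obtain ⟨s, t, rfl⟩ := h
  obtain ⟨p, hp⟩ := hv
  refine ⟨p + s.length, fun k hk => ?_⟩
  have h2 : s.length + k < (s ++ u ++ t).length := by simp; omega
  have := hp (s.length + k) h2
  rw [List.append_assoc, getD_middle _ _ _ hk] at this
  rw [this]; ring_nf

lemma occursInBi_of_infix {x : ℤ → Bool} {u v : Word} (h : u <:+: v) (hv : OccursInBi v x) :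
    OccursInBi u x := by
  obtain ⟨s, t, rfl⟩ := h
  obtain ⟨p, hp⟩ := hv
  refine ⟨p + s.length, fun k hk => ?_⟩
  have h2 : s.length + k < (s ++ u ++ t).length := by simp; omega
  have := hp (s.length + k) h2
  rw [List.append_assoc, getD_middle _ _ _ hk] at this
  rw [this]; push_cast; ring_nf

/-- The window of `x` from `a` of length `N`. -/
def win (x : ℤ → Bool) (a : ℤ) (N : ℕ) : Word := List.ofFn (fun t : Fin N => x (a + (t : ℕ)))

@[simp] lemma win_length (x a N) : (win x a N).length = N := by
  rw [win, List.length_ofFn]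

lemma win_getD {x : ℤ → Bool} {a : ℤ} {N t : ℕ} (ht : t < N) :
    (win x a N).getD t false = x (a + t) := by
  rw [List.getD_eq_getElem _ _ (by simpa using ht)]
  simp [win, List.getElem_ofFn]

lemma occursAtBi_win (x : ℤ → Bool) (a : ℤ) (N : ℕ) : OccursAtBi (win x a N) x a :=
  fun k hk => win_getD (by simpa using hk)

end Aux
/-! ### Building lemmas -/

section Bld
open List

/-- Assemble a list of (word, spacer) pairs with a final word. -/
def assemble (l : List (Word × ℕ)) (lst : Word) : Word :=
  l.foldr (fun p acc => p.1 ++ spacer p.2 ++ acc) lst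

@[simp] lemma assemble_nil (lst : Word) : assemble [] lst = lst := rfl

@[simp] lemma assemble_cons (v : Word) (s : ℕ) (l : List (Word × ℕ)) (lst : Word) :
    assemble ((v, s) :: l) lst = v ++ (spacer s ++ assemble l lst) := by
  simp [assemble, List.append_assoc]

lemma Building.word_eq (b : Building) : b.word = assemble b.pairs b.last := rfl

lemma assemble_append (l₁ l₂ : List (Word × ℕ)) (lst : Word) :
    assemble (l₁ ++ l₂) lst = assemble l₁ (assemble l₂ lst) := by
  simp [assemble, List.foldr_append]

lemma assemble_last_append (l : List (Word × ℕ)) (w t : Word) :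
    assemble l (w ++ t) = assemble l w ++ t := by
  induction l with
  | nil => rfl
  | cons p l ih =>
    obtain ⟨v, s⟩ := p
    simp [ih, List.append_assoc]

lemma length_assemble_ge (l : List (Word × ℕ)) (lst : Word) :
    lst.length ≤ (assemble l lst).length := by
  induction l with
  | nil => simp
  | cons p l ih =>
    obtain ⟨v, s⟩ := p
    simp only [assemble_cons, List.length_append]
    omega

lemma mem_assemble_infix {v : Word} {l : List (Word × ℕ)} {lst : Word}
    (hv : v ∈ (l.map Prod.fst ++ [lst])) : v <:+: assemble l lst := by
  induction l with
  | nil =>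
    simp only [List.map_nil, List.nil_append, List.mem_singleton] at hv
    subst hv; exact List.infix_rfl
  | cons p l ih =>
    obtain ⟨w, s⟩ := p
    simp only [List.map_cons, List.cons_append, List.mem_cons] at hv
    rcases hv with rfl | hv
    · exact ⟨[], spacer s ++ assemble l lst, by simp⟩
    · refine (ih hv).trans ?_
      exact ⟨w ++ spacer s, [], by simp [List.append_assoc]⟩

lemma mem_pieces_infix {b : Building} {v : Word} (hv : v ∈ b.pieces) : v <:+: b.word :=
  mem_assemble_infix hv

lemma pieces_cons (v : Word) (s : ℕ) (l : List (Word × ℕ)) (lst : Word) :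
    (Building.mk ((v, s) :: l) lst).pieces = v :: (Building.mk l lst).pieces := by
  simp [Building.pieces]

lemma firstPiece_eq_of_cons {b : Building} {v : Word} {s : ℕ} {l : List (Word × ℕ)}
    (h : b.pairs = (v, s) :: l) : b.firstPiece = v := by
  simp [Building.firstPiece, Building.pieces, h]

lemma firstPiece_prefix {b : Building} (h : b.pairs ≠ []) :
    b.firstPiece <+: b.word ∧ b.firstPiece.length + b.last.length ≤ b.word.length := by
  obtain ⟨⟨v, s⟩, l, hl⟩ := List.exists_cons_of_ne_nil h
  rw [firstPiece_eq_of_cons hl, b.word_eq, hl, assemble_cons]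
  constructor
  · exact List.prefix_append _ _
  · simp only [List.length_append, spacer_length]
    have := length_assemble_ge l b.last
    omega

lemma word_length_ge_two {b : Building} {S : Set Word} (hb : b.FromSet S) (hS : S ⊆ FF) :
    2 ≤ b.word.length := by
  have h1 := (firstPiece_prefix hb.1).2
  have h2 : b.firstPiece ∈ S := hb.2 _ (firstPiece_mem b)
  have h3 : b.last ∈ S := hb.2 _ (lastPiece_mem b)
  have := FF_length_pos (hS h2)
  have := FF_length_pos (hS h3)
  omega

/-- A false entry of an assembled word lies inside a piece. -/
lemma assemble_cover (l : List (Word × ℕ)) (lst : Word) :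
    ∀ k : ℕ, k < (assemble l lst).length → (assemble l lst).getD k false = false →
    ∃ v ∈ (l.map Prod.fst ++ [lst]), ∃ l₁ l₂ : Word, assemble l lst = l₁ ++ (v ++ l₂) ∧
      l₁.length ≤ k ∧ k < l₁.length + v.length := by
  induction l with
  | nil =>
    intro k hk _
    exact ⟨lst, by simp, [], [], by simp, by simp, by simpa using hk⟩
  | cons p l ih =>
    obtain ⟨v, s⟩ := p
    intro k hk hf
    simp only [assemble_cons] at hk hf ⊢
    by_cases h1 : k < v.length
    · exact ⟨v, by simp, [], spacer s ++ assemble l lst, by simp, by simp, by simpa using h1⟩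
    · push_neg at h1
      by_cases h2 : k < v.length + s
      · exfalso
        rw [List.getD_append_right _ _ _ _ h1,
          List.getD_append _ _ _ _ (by simp only [spacer_length]; omega),
          spacer_getD (by omega)] at hf
        simp at hf
      · push_neg at h2
        have hk' : k - (v.length + s) < (assemble l lst).length := by
          simp only [List.length_append, spacer_length] at hk; omega
        have hf' : (assemble l lst).getD (k - (v.length + s)) false = false := by
          rw [List.getD_append_right _ _ _ _ h1,
            List.getD_append_right _ _ _ _ (by simp only [spacer_length]; omega)] at hf
          rw [← hf]
          congr 1
          simp only [spacer_length]
          omega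
        obtain ⟨w, hw, l₁, l₂, heq, hle, hlt⟩ := ih (k - (v.length + s)) hk' hf'
        refine ⟨w, by simp only [List.map_cons, List.cons_append, List.mem_cons]; right; exact hw,
          v ++ (spacer s ++ l₁), l₂, ?_, ?_, ?_⟩
        · rw [List.append_assoc, List.append_assoc, ← heq]
        · simp only [List.length_append, spacer_length]; omega
        · simp only [List.length_append, spacer_length]; omega

/-- Substitution of buildings into a building. -/
def Building.subst (b : Building) (β : Word → Building) : Building :=
  ⟨(b.pairs.flatMap fun p => (β p.1).pairs ++ [((β p.1).last, p.2)]) ++ (β b.last).pairs,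
    (β b.last).last⟩

lemma subst_pieces (b : Building) (β : Word → Building) :
    (b.subst β).pieces = b.pieces.flatMap fun v => (β v).pieces := by
  simp only [Building.pieces, Building.subst, List.flatMap_append, List.flatMap_map,
    List.map_append, List.map_flatMap, List.append_assoc, List.flatMap_cons, List.flatMap_nil,
    List.map_cons, List.map_nil, List.append_nil]

lemma subst_pairs_ne {b : Building} (β : Word → Building) (h : b.pairs ≠ []) :
    (b.subst β).pairs ≠ [] := by
  obtain ⟨⟨v, s⟩, l, hl⟩ := List.exists_cons_of_ne_nil h
  simp [Building.subst, hl]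

lemma headI_append_of_ne_nil {α : Type*} [Inhabited α] {l t : List α} (h : l ≠ []) : (l ++ t).headI = l.headI := by
  cases l with
  | nil => exact absurd rfl h
  | cons a r => rfl

lemma subst_firstPiece (b : Building) (β : Word → Building) :
    (b.subst β).firstPiece = (β b.firstPiece).firstPiece := by
  obtain ⟨q, rest, hq⟩ := List.exists_cons_of_ne_nil (pieces_ne_nil b)
  have h1 : b.firstPiece = q := by simp [Building.firstPiece, hq]
  have h2 : (b.subst β).pieces = (β q).pieces ++ rest.flatMap (fun v => (β v).pieces) := by
    rw [subst_pieces, hq, List.flatMap_cons]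
  rw [h1]
  simp only [Building.firstPiece, h2]
  exact headI_append_of_ne_nil (pieces_ne_nil _)

lemma subst_word (b : Building) (β : Word → Building)
    (h : ∀ v ∈ b.pieces, (β v).word = v) : (b.subst β).word = b.word := by
  obtain ⟨pairs, lst⟩ := b
  induction pairs with
  | nil =>
    simp only [Building.word_eq, Building.subst, List.flatMap_nil, List.nil_append]
    have := h lst (by simp [Building.pieces])
    simpa [Building.word_eq] using this
  | cons p l ih =>
    obtain ⟨v, s⟩ := p
    have hv : (β v).word = v := h v (by simp [Building.pieces])
    have IH : ((Building.mk l lst).subst β).word = (Building.mk l lst).word := by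
      refine ih ?_
      intro w hw
      refine h w ?_
      rw [pieces_cons]
      exact List.mem_cons_of_mem _ hw
    have e1 : ((Building.mk ((v,s)::l) lst).subst β).word
        = assemble ((β v).pairs ++ ([((β v).last, s)] ++
            ((l.flatMap fun p => (β p.1).pairs ++ [((β p.1).last, p.2)]) ++ (β lst).pairs)))
          (β lst).last := by
      simp only [Building.subst, Building.word_eq, List.flatMap_cons, List.append_assoc]
    rw [e1, assemble_append, assemble_append]
    have e2 : ((Building.mk l lst).subst β).word
        = assemble ((l.flatMap fun p => (β p.1).pairs ++ [((β p.1).last, p.2)]) ++ (β lst).pairs)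
            (β lst).last := rfl
    rw [e2] at IH
    rw [IH]
    have e3 : assemble [((β v).last, s)] ((Building.mk l lst).word)
        = (β v).last ++ (spacer s ++ assemble l lst) := by
      simp [Building.word_eq, assemble]
    rw [e3, assemble_last_append]
    have e4 : assemble (β v).pairs (β v).last = v := hv
    rw [e4]
    simp [Building.word_eq, List.append_assoc]

end Bld
/-! ### Zero decomposition, finite-set and ultrafilter helpers -/

section Helpers
open List

lemma exists_zero_decomp_aux : ∀ m : ℕ, ∀ v : Word, v.length ≤ m → v ∈ FF → 2 ≤ v.length →
    ∃ b : Building, b.FromSet {[false]} ∧ b.word = v ∧ b.firstPiece = [false] := by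
  intro m
  induction m with
  | zero => intro v h _ h2; omega
  | succ m ih =>
    intro v hlen hFF h2
    obtain ⟨hne, hh, hl⟩ := hFF
    obtain ⟨a, r, rfl⟩ := List.exists_cons_of_ne_nil hne
    have ha : a = false := by simpa using hh
    subst ha
    obtain ⟨s, r', hsplit, hhead⟩ : ∃ s r', r = spacer s ++ r' ∧
        (r' ≠ [] → r'.head? = some false) := by
      refine ⟨(r.takeWhile fun b => b).length, r.dropWhile (fun b => b), ?_, ?_⟩
      · rw [spacer]
        conv_lhs => rw [← List.takeWhile_append_dropWhile (p := fun b => b) (l := r)]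
        congr 1
        exact List.eq_replicate_of_mem (fun b hb => by
          have := List.mem_takeWhile_imp hb; simpa using this)
      · intro hr'ne
        rw [List.head?_eq_head hr'ne]
        have := List.head_dropWhile_not (fun b => b) hr'ne
        simpa using this
    have hr'ne : r' ≠ [] := by
      intro hemp
      rw [hemp, List.append_nil] at hsplit
      have hlast : (false :: r).getD ((false :: r).length - 1) false = false :=
        FF_getD_last ⟨hne, hh, hl⟩
      rcases Nat.eq_zero_or_pos s with hs0 | hs0
      · rw [hsplit, hs0] at h2; simp [spacer] at h2
      · rw [hsplit] at hlast
        simp only [List.length_cons, spacer_length, Nat.add_sub_cancel] at hlast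
        have hss : s - 1 + 1 = s := by omega
        rw [← hss, List.getD_cons_succ, spacer_getD (by omega)] at hlast
        simp at hlast
    have hr'h := hhead hr'ne
    have hr'FF : r' ∈ FF := by
      refine ⟨hr'ne, hr'h, ?_⟩
      have hgl : (false :: r).getLast? = r'.getLast? := by
        rw [hsplit]
        show (((false :: spacer s) ++ r')).getLast? = r'.getLast?
        rw [List.getLast?_append, List.getLast?_eq_getLast hr'ne]
        simp
      rw [← hgl, hl]
    have hr'len : r'.length ≤ m := by
      have : (false :: r).length = 1 + s + r'.length := by
        rw [hsplit]; simp [spacer]; omega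
      omega
    rcases Nat.lt_or_ge r'.length 2 with hsmall | hbig
    · have hr1 : r' = [false] := by
        have hpos := FF_length_pos hr'FF
        have hlen1 : r'.length = 1 := by omega
        obtain ⟨b, t, rfl⟩ := List.exists_cons_of_ne_nil hr'ne
        simp only [List.length_cons] at hlen1
        have ht : t = [] := List.length_eq_zero_iff.mp (by omega)
        subst ht
        have hb : b = false := by simpa using hr'h
        rw [hb]
      refine ⟨⟨[([false], s)], [false]⟩, ⟨by simp, ?_⟩, ?_, ?_⟩
      · intro w hw
        have hw' : w = [false] := by
          simp only [Building.pieces, List.map_cons, List.map_nil, List.cons_append,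
            List.nil_append, List.mem_cons, List.mem_singleton] at hw
          tauto
        simp [hw']
      · show assemble [([false], s)] [false] = false :: r
        rw [hsplit, hr1]
        simp [assemble]
      · rfl
    · obtain ⟨b', hb'FS, hb'w, hb'f⟩ := ih r' hr'len hr'FF hbig
      refine ⟨⟨([false], s) :: b'.pairs, b'.last⟩, ⟨by simp, ?_⟩, ?_, ?_⟩
      · intro w hw
        rw [show (⟨([false], s) :: b'.pairs, b'.last⟩ : Building)
            = Building.mk (([false],s) :: b'.pairs) b'.last from rfl, pieces_cons] at hw
        rcases List.mem_cons.mp hw with rfl | hw'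
        · simp
        · exact hb'FS.2 _ (by

            have : (Building.mk b'.pairs b'.last) = b' := rfl
            rwa [this] at hw')
      · show assemble (([false], s) :: b'.pairs) b'.last = false :: r
        rw [assemble_cons, hsplit]
        have : assemble b'.pairs b'.last = r' := by rw [← b'.word_eq, hb'w]
        rw [this]
        simp
      · exact firstPiece_eq_of_cons rfl

/-- Monotone sequences of subsets of a finite set stabilize. -/
lemma mono_stab {α : Type*} (f : ℕ → Set α) (T : Set α) (hT : T.Finite)
    (hsub : ∀ k, f k ⊆ T) (hstep : ∀ k, f k ⊆ f (k + 1)) :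
    ∃ K, ∀ k, K ≤ k → f k = f K := by
  have hchain : ∀ {a b : ℕ}, a ≤ b → f a ⊆ f b := by
    intro a b hab
    induction b, hab using Nat.le_induction with
    | base => exact subset_rfl
    | succ b _ ih => exact ih.trans (hstep b)
  have hfin : ∀ k, (f k).Finite := fun k => hT.subset (hsub k)
  have hbdd : BddAbove (Set.range fun k => (f k).ncard) := by
    refine ⟨T.ncard, ?_⟩
    rintro _ ⟨k, rfl⟩
    exact Set.ncard_le_ncard (hsub k) hT
  obtain ⟨K, hK⟩ : ∃ K, (f K).ncard = sSup (Set.range fun k => (f k).ncard) := by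
    have := Nat.sSup_mem (s := Set.range fun k => (f k).ncard) ⟨_, ⟨0, rfl⟩⟩ hbdd
    obtain ⟨K, hK⟩ := this
    exact ⟨K, hK⟩
  refine ⟨K, fun k hk => ?_⟩
  have h1 : f K ⊆ f k := hchain hk
  have h2 : (f k).ncard ≤ (f K).ncard := by
    rw [hK]; exact le_csSup hbdd ⟨k, rfl⟩
  exact (Set.eq_of_subset_of_ncard_le h1 h2 (hfin k)).symm

/-- Enumeration of a finite set with a distinguished first element. -/
lemma exists_enum {α : Type*} {T : Set α} (hfin : T.Finite) {a : α} (ha : a ∈ T) {N : ℕ}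
    (hcard : T.ncard ≤ N) :
    ∃ e : ℕ → α, e 1 = a ∧ (∀ j, 1 ≤ j → j ≤ N → e j ∈ T) ∧
      ∀ v ∈ T, ∃ j, 1 ≤ j ∧ j ≤ N ∧ e j = v := by
  classical
  obtain ⟨l, hlmem, hllen⟩ : ∃ l : List α, (∀ x ∈ l, x ∈ T) ∧
      (∀ v ∈ T, v ≠ a → v ∈ l) ∧ l.length = T.ncard - 1 := by
    refine ⟨(hfin.toFinset.erase a).toList, ?_, ?_, ?_⟩
    · intro x hx
      rw [Finset.mem_toList] at hx
      have := Finset.mem_of_mem_erase hx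
      rwa [Set.Finite.mem_toFinset] at this
    · intro v hv hva
      rw [Finset.mem_toList, Finset.mem_erase]
      exact ⟨hva, by rwa [Set.Finite.mem_toFinset]⟩
    · rw [Finset.length_toList, Finset.card_erase_of_mem (by rwa [Set.Finite.mem_toFinset]),
        ← Set.ncard_eq_toFinset_card T hfin]
  obtain ⟨hlall, hllen⟩ := hllen
  have hcard1 : 1 ≤ T.ncard := (Set.ncard_pos hfin).mpr ⟨a, ha⟩
  refine ⟨fun j => (a :: l).getD (j - 1) a, by simp, ?_, ?_⟩
  · intro j _ _
    show (a :: l).getD (j - 1) a ∈ T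
    by_cases hj : j - 1 < (a :: l).length
    · rw [List.getD_eq_getElem _ _ hj]
      have := List.getElem_mem hj
      rcases List.mem_cons.mp this with h | h
      · rw [h]; exact ha
      · exact hlmem _ h
    · rw [List.getD_eq_default _ _ (by omega)]; exact ha
  · intro v hv
    by_cases hva : v = a
    · exact ⟨1, le_rfl, by omega, by simpa using hva.symm⟩
    · have hvl : v ∈ l := hlall v hv hva
      obtain ⟨⟨m, hm⟩, hget⟩ := List.mem_iff_get.mp hvl
      refine ⟨m + 2, by omega, by omega, ?_⟩
      show (a :: l).getD (m + 2 - 1) a = v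
      have h1 : m + 2 - 1 = m + 1 := by omega
      rw [h1, List.getD_cons_succ, List.getD_eq_getElem _ _ hm]
      exact hget

/-- Fibers of an ultrafilter over a finite set. -/
lemma ultra_fiber {α : Type*} (U : Ultrafilter ℕ) {h : ℕ → α} {T : Set α} (hT : T.Finite)
    (hmem : {m | h m ∈ T} ∈ U) : ∃ a ∈ T, {m | h m = a} ∈ U := by
  have hU : (⋃ a ∈ T, {m | h m = a}) ∈ U := by
    refine Filter.mem_of_superset hmem ?_
    intro m hm
    exact Set.mem_biUnion hm rfl
  exact (Ultrafilter.finite_biUnion_mem_iff hT).mp hU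

lemma cofinite_mem_uof {s : Set ℕ} (hs : s ∈ (Filter.cofinite : Filter ℕ)) :
    s ∈ Ultrafilter.of (Filter.cofinite : Filter ℕ) :=
  Ultrafilter.of_le _ hs

lemma ge_mem_uof (k : ℕ) : {m : ℕ | k ≤ m} ∈ Ultrafilter.of (Filter.cofinite : Filter ℕ) := by
  apply cofinite_mem_uof
  rw [Filter.mem_cofinite]
  have : {m : ℕ | k ≤ m}ᶜ = {m | m < k} := by ext m; simp
  rw [this]
  exact Set.finite_lt_nat k

end Helpers
/-! ### König's lemma via ultrafilters, limit points, closure -/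

section Dyn
open List Filter

/-- Iterated descent maps. -/
private def desc {α : Type*} (f : ℕ → α → α) (k : ℕ) : ℕ → α → α
  | 0, v => v
  | (m + 1), v => if k ≤ m then desc f k m (f m v) else v

lemma desc_succ {α : Type*} (f : ℕ → α → α) {k m : ℕ} (h : k ≤ m) (v : α) :
    desc f k (m + 1) v = desc f k m (f m v) := by
  simp [desc, h]

lemma desc_self {α : Type*} (f : ℕ → α → α) (k : ℕ) (v : α) : desc f k k v = v := by
  cases k with
  | zero => rfl
  | succ m => simp [desc]

lemma desc_mem {α : Type*} (f : ℕ → α → α) (D : ℕ → Set α)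
    (hf : ∀ k v, v ∈ D (k + 1) → f k v ∈ D k) {k : ℕ} :
    ∀ m, k ≤ m → ∀ v ∈ D m, desc f k m v ∈ D k := by
  intro m
  induction m with
  | zero => intro hk v hv; interval_cases k; simpa [desc_self] using hv
  | succ m ihm =>
    intro hk v hv
    rcases Nat.eq_or_lt_of_le hk with rfl | hlt
    · simpa [desc_self] using hv
    · rw [desc_succ f (by omega)]
      exact ihm (by omega) _ (hf m v hv)

lemma desc_step {α : Type*} (f : ℕ → α → α) {k : ℕ} :
    ∀ m, k < m → ∀ v, desc f k m v = f k (desc f (k + 1) m v) := by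
  intro m
  induction m with
  | zero => intro h; omega
  | succ m ihm =>
    intro hk v
    rcases Nat.eq_or_lt_of_le hk with he | hlt
    · have : k = m := by omega
      subst this
      rw [desc_succ f le_rfl, desc_self, desc_self]
    · rw [desc_succ f (by omega), desc_succ f (by omega), ihm (by omega)]

/-- König's lemma for inverse systems of finite nonempty sets. -/
lemma konig {α : Type*} (D : ℕ → Set α) (hfin : ∀ k, (D k).Finite)
    (hne : ∀ k, (D k).Nonempty) (f : ℕ → α → α)
    (hf : ∀ k v, v ∈ D (k + 1) → f k v ∈ D k) :
    ∃ u : ℕ → α, (∀ k, u k ∈ D k) ∧ ∀ k, f k (u (k + 1)) = u k := by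
  classical
  choose vm hvm using hne
  set U := Ultrafilter.of (Filter.cofinite : Filter ℕ) with hU
  have hDmem : ∀ k, {m | desc f k m (vm m) ∈ D k} ∈ U := by
    intro k
    refine Filter.mem_of_superset (ge_mem_uof k) ?_
    intro m hm
    exact desc_mem f D hf m hm _ (hvm m)
  have hex : ∀ k, ∃ a ∈ D k, {m | desc f k m (vm m) = a} ∈ U := by
    intro k
    exact ultra_fiber U (hfin k) (hDmem k)
  choose u hu hfib using hex
  refine ⟨u, hu, fun k => ?_⟩
  have h1 : {m | desc f k m (vm m) = f k (u (k + 1))} ∈ U := by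
    refine Filter.mem_of_superset (Filter.inter_mem (hfib (k + 1)) (ge_mem_uof (k + 1))) ?_
    rintro m ⟨hm1, hm2⟩
    show desc f k m (vm m) = f k (u (k + 1))
    rw [desc_step f m (by exact hm2) (vm m), hm1]
  have h2 := Filter.inter_mem h1 (hfib k)
  obtain ⟨m, hm1, hm2⟩ := Filter.nonempty_of_mem h2
  rw [← hm1, ← hm2]

/-- A bi-infinite limit point with a 0 at the origin, from a one-sided word with
unboundedly many 0s. -/
lemma exists_x_of_zeros (W : ℕ → Bool) (hz : ∀ N : ℕ, ∃ p, N ≤ p ∧ W p = false) :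
    ∃ x : ℤ → Bool, x 0 = false ∧ ∀ u : Word, OccursInBi u x → OccursInInf u W := by
  classical
  choose p hp hpz using hz
  set U := Ultrafilter.of (Filter.cofinite : Filter ℕ) with hUdef
  set x : ℤ → Bool := fun k => if {m | W ((p m : ℤ) + k).toNat = true} ∈ U then true else false
    with hxdef
  have hnonneg : ∀ k : ℤ, {m | 0 ≤ (p m : ℤ) + k} ∈ U := by
    intro k
    refine Filter.mem_of_superset (ge_mem_uof k.natAbs) ?_
    intro m hm
    have := hp m
    simp only [Set.mem_setOf_eq] at hm ⊢
    omega
  have hG : ∀ k : ℤ, {m | 0 ≤ (p m : ℤ) + k ∧ W ((p m : ℤ) + k).toNat = x k} ∈ U := by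
    intro k
    by_cases hS : {m | W ((p m : ℤ) + k).toNat = true} ∈ U
    · have hx : x k = true := by rw [hxdef]; simp [hS]
      rw [hx]
      exact Filter.inter_mem (hnonneg k) hS
    · have hx : x k = false := by rw [hxdef]; simp [hS]
      rw [hx]
      have hc : {m | W ((p m : ℤ) + k).toNat = true}ᶜ ∈ U :=
        (Ultrafilter.compl_mem_iff_notMem).mpr hS
      refine Filter.mem_of_superset (Filter.inter_mem (hnonneg k) hc) ?_
      rintro m ⟨h1, h2⟩
      simp only [Set.mem_compl_iff, Set.mem_setOf_eq] at h1 h2 ⊢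
      exact ⟨h1, by simpa using h2⟩
  refine ⟨x, ?_, ?_⟩
  · have : {m | W ((p m : ℤ) + (0:ℤ)).toNat = true} = ∅ := by
      ext m
      simp only [Set.mem_setOf_eq, Set.mem_empty_iff_false, iff_false]
      rw [add_zero, Int.toNat_natCast]
      simp [hpz m]
    rw [hxdef]
    simp only [this]
    rw [if_neg (by simp [Filter.empty_notMem])]
  · intro u hu
    obtain ⟨q, hq⟩ := hu
    have hA : (⋂ t ∈ Finset.range u.length, {m | 0 ≤ (p m : ℤ) + (q + t) ∧
        W ((p m : ℤ) + (q + t)).toNat = x (q + t)}) ∩ {m | 0 ≤ (p m : ℤ) + q} ∈ U := by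
      refine Filter.inter_mem ?_ (hnonneg q)
      refine (Filter.biInter_finset_mem _).mpr ?_
      intro t _
      exact hG (q + t)
    obtain ⟨m, hmA, hmq⟩ := Filter.nonempty_of_mem hA
    simp only [Set.mem_setOf_eq] at hmq
    refine ⟨((p m : ℤ) + q).toNat, fun t ht => ?_⟩
    have hmt := Set.mem_iInter₂.mp hmA t (Finset.mem_range.mpr ht)
    simp only [Set.mem_setOf_eq] at hmt
    obtain ⟨h1, h2⟩ := hmt
    rw [hq t ht, ← h2]
    congr 1
    omega

/-- Closure criterion by agreement on windows. -/
lemma mem_closure_of_windows {y : ℤ → Bool} {S : Set (ℤ → Bool)}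
    (h : ∀ N : ℕ, ∃ z ∈ S, ∀ k : ℤ, |k| ≤ (N : ℤ) → z k = y k) : y ∈ closure S := by
  rw [mem_closure_iff_nhds]
  intro t ht
  rw [nhds_pi, Filter.mem_pi] at ht
  obtain ⟨I, hIfin, w, hw, hsub⟩ := ht
  obtain ⟨B, hB⟩ := hIfin.bddAbove
  obtain ⟨A, hA⟩ := hIfin.bddBelow
  set N : ℕ := (max B (-A)).toNat with hN
  obtain ⟨z, hz, hzy⟩ := h N
  refine ⟨z, hsub ?_, hz⟩
  intro k hk
  have h1 : k ≤ B := hB hk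
  have h2 : A ≤ k := hA hk
  have habs : |k| ≤ (N : ℤ) := by
    rw [abs_le]
    constructor <;> omega
  rw [hzy k habs]
  have := hw k
  rwa [nhds_discrete, Filter.mem_pure] at this

/-- Occurrences persist to orbit closures. -/
lemma occursInBi_of_closure {y x : ℤ → Bool} (h : y ∈ closure (sorbit x)) {u : Word}
    (hu : OccursInBi u y) : OccursInBi u x := by
  obtain ⟨q, hq⟩ := hu
  set O : Set (ℤ → Bool) := ⋂ t ∈ Finset.range u.length,
    {z : ℤ → Bool | z (q + t) = y (q + t)} with hO
  have hOopen : IsOpen O := by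
    refine isOpen_biInter_finset ?_
    intro t _
    have he : {z : ℤ → Bool | z (q + t) = y (q + t)}
        = (fun z : ℤ → Bool => z (q + (t : ℤ))) ⁻¹' {y (q + t)} := rfl
    rw [he]
    exact (continuous_apply _).isOpen_preimage _ (isOpen_discrete _)
  have hyO : y ∈ O := by
    rw [hO]
    refine Set.mem_iInter₂.mpr fun t _ => rfl
  obtain ⟨z, hzO, hzS⟩ := _root_.mem_closure_iff.mp h O hOopen hyO
  obtain ⟨mm, rfl⟩ := hzS
  refine ⟨q + mm, fun t ht => ?_⟩
  have := Set.mem_iInter₂.mp hzO t (Finset.mem_range.mpr ht)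
  simp only [Set.mem_setOf_eq] at this
  rw [hq t ht, ← this]
  congr 1
  ring

end Dyn
/-! ### Machinery on rank constructions -/

section Constr
open List

variable {n : ℕ}

lemma wd1_mem_level (c : RankConstruction n) (i : ℕ) : c.wd i 1 ∈ levelSet c.ni c.wd i :=
  ⟨1, le_rfl, c.ni_pos i, rfl⟩

lemma level_sub_FF (c : RankConstruction n) (i : ℕ) : levelSet c.ni c.wd i ⊆ FF := by
  rintro w ⟨j, h1, h2, rfl⟩
  exact c.mem_FF i j h1 h2

lemma level_sub_image (c : RankConstruction n) (i : ℕ) :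
    levelSet c.ni c.wd i ⊆ (fun j => c.wd i j) '' (Set.Icc 1 (c.ni i)) := by
  rintro w ⟨j, h1, h2, rfl⟩
  exact ⟨j, ⟨h1, h2⟩, rfl⟩

lemma level_finite (c : RankConstruction n) (i : ℕ) : (levelSet c.ni c.wd i).Finite :=
  (((Set.finite_Icc _ _).image _)).subset (level_sub_image c i)

lemma level_ncard (c : RankConstruction n) (i : ℕ) : (levelSet c.ni c.wd i).ncard ≤ n := by
  have h1 : (levelSet c.ni c.wd i).ncard ≤ ((fun j => c.wd i j) '' (Set.Icc 1 (c.ni i))).ncard :=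
    Set.ncard_le_ncard (level_sub_image c i) ((Set.finite_Icc _ _).image _)
  have h2 : ((fun j => c.wd i j) '' (Set.Icc 1 (c.ni i))).ncard ≤ (Set.Icc 1 (c.ni i)).ncard :=
    Set.ncard_image_le (Set.finite_Icc _ _)
  have h3 : (Set.Icc 1 (c.ni i)).ncard = c.ni i := by
    rw [← Finset.coe_Icc, Set.ncard_coe_finset, Nat.card_Icc]
    omega
  have := c.ni_le i
  omega

lemma level_zero (c : RankConstruction n) : levelSet c.ni c.wd 0 = {[false]} := by
  apply Set.Subset.antisymm
  · rintro w ⟨j, h1, h2, rfl⟩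
    rw [c.wd_zero j h1 h2]
    rfl
  · rintro w hw
    rw [Set.mem_singleton_iff] at hw
    subst hw
    exact ⟨1, le_rfl, c.ni_pos 0, c.wd_zero 1 le_rfl (c.ni_pos 0)⟩

lemma level_len_two (c : RankConstruction n) {i : ℕ} {v : Word}
    (hv : v ∈ levelSet c.ni c.wd (i + 1)) : 2 ≤ v.length := by
  obtain ⟨j, h1, h2, rfl⟩ := hv
  rw [← c.bld_word i j h1 h2]
  exact word_length_ge_two (c.bld_from i j h1 h2) (level_sub_FF c i)

open scoped Classical in
/-- Choose an index realizing a word of a level, preferring index 1 for the top word. -/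
noncomputable def chooseIdx (c : RankConstruction n) (i : ℕ) (v : Word) : ℕ :=
  if v = c.wd i 1 then 1 else if h : v ∈ levelSet c.ni c.wd i then h.choose else 1

lemma chooseIdx_spec (c : RankConstruction n) {i : ℕ} {v : Word}
    (hv : v ∈ levelSet c.ni c.wd i) :
    1 ≤ chooseIdx c i v ∧ chooseIdx c i v ≤ c.ni i ∧ c.wd i (chooseIdx c i v) = v := by
  unfold chooseIdx
  by_cases h : v = c.wd i 1
  · rw [if_pos h]; exact ⟨le_rfl, c.ni_pos i, h.symm⟩
  · rw [if_neg h, dif_pos hv]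
    exact ⟨hv.choose_spec.1, hv.choose_spec.2.1, hv.choose_spec.2.2⟩

lemma chooseIdx_top (c : RankConstruction n) (i : ℕ) : chooseIdx c i (c.wd i 1) = 1 :=
  if_pos rfl

/-- The chosen building of a word of level `i+1` from level `i`. -/
noncomputable def chosen (c : RankConstruction n) (i : ℕ) (v : Word) : Building :=
  c.bld i (chooseIdx c (i + 1) v)

lemma chosen_word (c : RankConstruction n) {i : ℕ} {v : Word}
    (hv : v ∈ levelSet c.ni c.wd (i + 1)) : (chosen c i v).word = v := by
  obtain ⟨h1, h2, h3⟩ := chooseIdx_spec c hv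
  rw [chosen, c.bld_word i _ h1 h2, h3]

lemma chosen_from (c : RankConstruction n) {i : ℕ} {v : Word}
    (hv : v ∈ levelSet c.ni c.wd (i + 1)) :
    (chosen c i v).FromSet (levelSet c.ni c.wd i) := by
  obtain ⟨h1, h2, _⟩ := chooseIdx_spec c hv
  exact c.bld_from i _ h1 h2

lemma chosen_first_top (c : RankConstruction n) (i : ℕ) :
    (chosen c i (c.wd (i + 1) 1)).firstPiece = c.wd i 1 := by
  rw [chosen, chooseIdx_top]
  exact c.bld_start i

/-- Iterated composition of chosen buildings from level `i` up to level `i+k+1`. -/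
noncomputable def compBld (c : RankConstruction n) (i : ℕ) : ℕ → Word → Building
  | 0 => chosen c i
  | (k + 1) => fun v => (chosen c (i + k + 1) v).subst (compBld c i k)

lemma compBld_succ (c : RankConstruction n) (i k : ℕ) (v : Word) :
    compBld c i (k + 1) v = (chosen c (i + k + 1) v).subst (compBld c i k) := rfl

lemma compBld_word (c : RankConstruction n) (i : ℕ) :
    ∀ k v, v ∈ levelSet c.ni c.wd (i + k + 1) → (compBld c i k v).word = v := by
  intro k
  induction k with
  | zero => intro v hv; exact chosen_word c hv
  | succ k ih =>
    intro v hv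
    rw [compBld_succ, subst_word]
    · exact chosen_word c hv
    · intro u hu
      exact ih u ((chosen_from c hv).2 u hu)

lemma compBld_from (c : RankConstruction n) (i : ℕ) :
    ∀ k v, v ∈ levelSet c.ni c.wd (i + k + 1) →
      (compBld c i k v).FromSet (levelSet c.ni c.wd i) := by
  intro k
  induction k with
  | zero => intro v hv; exact chosen_from c hv
  | succ k ih =>
    intro v hv
    constructor
    · exact subst_pairs_ne _ (chosen_from c hv).1
    · intro u hu
      rw [compBld_succ, subst_pieces, List.mem_flatMap] at hu
      obtain ⟨w, hw, hu⟩ := hu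
      exact (ih w ((chosen_from c hv).2 w hw)).2 u hu

lemma compBld_first (c : RankConstruction n) (i : ℕ) :
    ∀ k, (compBld c i k (c.wd (i + k + 1) 1)).firstPiece = c.wd i 1 := by
  intro k
  induction k with
  | zero => exact chosen_first_top c i
  | succ k ih =>
    show (compBld c i (k + 1) (c.wd (i + k + 1 + 1) 1)).firstPiece = c.wd i 1
    rw [compBld_succ, subst_firstPiece, chosen_first_top c (i + k + 1)]
    exact ih

lemma compBld_pieces_bot (c : RankConstruction n) :
    ∀ k i v, (compBld c i (k + 1) v).pieces
      = (compBld c (i + 1) k v).pieces.flatMap fun u => (chosen c i u).pieces := by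
  intro k
  induction k with
  | zero =>
    intro i v
    rw [compBld_succ, subst_pieces]
    rfl
  | succ k ih =>
    intro i v
    rw [compBld_succ, subst_pieces]
    conv_rhs => rw [compBld_succ, subst_pieces]
    rw [Nat.add_right_comm i 1 k]
    simp only [ih i]
    rw [List.flatMap_assoc]
    rfl

/-- The set of level-`i` words hereditarily used in `v_{i+k+1,1}`. -/
def UsedIn (c : RankConstruction n) (i k : ℕ) : Set Word :=
  {u | u ∈ (compBld c i k (c.wd (i + k + 1) 1)).pieces}

lemma usedIn_mono (c : RankConstruction n) (i k : ℕ) : UsedIn c i k ⊆ UsedIn c i (k + 1) := by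
  intro u hu
  show u ∈ (compBld c i (k + 1) (c.wd (i + (k + 1) + 1) 1)).pieces
  rw [compBld_succ, subst_pieces, List.mem_flatMap]
  refine ⟨c.wd (i + k + 1) 1, ?_, hu⟩
  rw [← chosen_first_top c (i + k + 1)]
  exact firstPiece_mem _

lemma usedIn_sub (c : RankConstruction n) (i k : ℕ) : UsedIn c i k ⊆ levelSet c.ni c.wd i :=
  fun u hu => (compBld_from c i k _ (wd1_mem_level c (i + k + 1))).2 u hu

lemma wd1_mem_usedIn (c : RankConstruction n) (i : ℕ) : ∀ k, c.wd i 1 ∈ UsedIn c i k := by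
  intro k
  induction k with
  | zero =>
    show c.wd i 1 ∈ (compBld c i 0 (c.wd (i + 1) 1)).pieces
    rw [← chosen_first_top c i]
    exact firstPiece_mem _
  | succ k ih => exact usedIn_mono c i k ih

/-- Stabilization point of `UsedIn`. -/
noncomputable def KK (c : RankConstruction n) (i : ℕ) : ℕ :=
  (mono_stab (UsedIn c i) _ (level_finite c i) (usedIn_sub c i) (usedIn_mono c i)).choose

lemma usedIn_stab (c : RankConstruction n) (i : ℕ) :
    ∀ k, KK c i ≤ k → UsedIn c i k = UsedIn c i (KK c i) :=
  (mono_stab (UsedIn c i) _ (level_finite c i) (usedIn_sub c i) (usedIn_mono c i)).choose_spec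

/-- The stabilized set of hereditarily used words at level `i`. -/
noncomputable def UU (c : RankConstruction n) (i : ℕ) : Set Word := UsedIn c i (KK c i)

lemma UU_eq (c : RankConstruction n) (i : ℕ) {k : ℕ} (h : KK c i ≤ k) :
    UsedIn c i k = UU c i := usedIn_stab c i k h

lemma wd1_mem_UU (c : RankConstruction n) (i : ℕ) : c.wd i 1 ∈ UU c i :=
  wd1_mem_usedIn c i _

lemma UU_sub (c : RankConstruction n) (i : ℕ) : UU c i ⊆ levelSet c.ni c.wd i :=
  usedIn_sub c i _

lemma UU_fin (c : RankConstruction n) (i : ℕ) : (UU c i).Finite :=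
  (level_finite c i).subset (UU_sub c i)

lemma UU_ncard (c : RankConstruction n) (i : ℕ) : (UU c i).ncard ≤ n :=
  le_trans (Set.ncard_le_ncard (UU_sub c i) (level_finite c i)) (level_ncard c i)

lemma UU_zero (c : RankConstruction n) : UU c 0 = {[false]} := by
  apply Set.Subset.antisymm
  · exact (level_zero c) ▸ UU_sub c 0
  · rintro w hw
    rw [Set.mem_singleton_iff] at hw
    subst hw
    rw [← c.wd_zero 1 le_rfl (c.ni_pos 0)]
    exact wd1_mem_UU c 0

lemma UU_pieces (c : RankConstruction n) {i : ℕ} {v : Word} (hv : v ∈ UU c (i + 1)) :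
    ∀ u ∈ (chosen c i v).pieces, u ∈ UU c i := by
  intro u hu
  set k := max (KK c (i + 1)) (KK c i) with hk
  have hv' : v ∈ UsedIn c (i + 1) k := by
    rw [UU_eq c (i + 1) (le_max_left _ _)]
    exact hv
  have hmem : u ∈ UsedIn c i (k + 1) := by
    show u ∈ (compBld c i (k + 1) (c.wd (i + (k + 1) + 1) 1)).pieces
    rw [compBld_pieces_bot, List.mem_flatMap]
    refine ⟨v, ?_, hu⟩
    have hv'' : v ∈ (compBld c (i + 1) k (c.wd (i + 1 + k + 1) 1)).pieces := hv'
    rw [Nat.add_right_comm i 1 k] at hv''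
    exact hv''
  rwa [UU_eq c i (le_trans (le_max_right _ _) (Nat.le_succ k))] at hmem

lemma UU_comp_pieces (c : RankConstruction n) :
    ∀ k i v, v ∈ UU c (i + k + 1) → ∀ u ∈ (compBld c i k v).pieces, u ∈ UU c i := by
  intro k
  induction k with
  | zero => intro i v hv u hu; exact UU_pieces c hv u hu
  | succ k ih =>
    intro i v hv u hu
    rw [compBld_succ, subst_pieces, List.mem_flatMap] at hu
    obtain ⟨w, hw, hu⟩ := hu
    exact ih i w (UU_pieces c hv w hw) u hu

lemma wd1_len_lt (c : RankConstruction n) (i : ℕ) :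
    (c.wd i 1).length < (c.wd (i + 1) 1).length := by
  have hFrom := c.bld_from i 1 le_rfl (c.ni_pos (i + 1))
  have h1 := (firstPiece_prefix hFrom.1).2
  rw [c.bld_start i, c.bld_word i 1 le_rfl (c.ni_pos (i + 1))] at h1
  have hlast : (c.bld i 1).last ∈ FF :=
    level_sub_FF c i (hFrom.2 _ (lastPiece_mem _))
  have := FF_length_pos hlast
  omega

lemma wd1_len_ge (c : RankConstruction n) (i : ℕ) : i + 1 ≤ (c.wd i 1).length := by
  induction i with
  | zero =>
    rw [c.wd_zero 1 le_rfl (c.ni_pos 0)]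
    simp
  | succ i ih =>
    have := wd1_len_lt c i
    omega

lemma wd1_prefix (c : RankConstruction n) {i i' : ℕ} (h : i ≤ i') :
    c.wd i 1 <+: c.wd i' 1 := by
  induction i', h using Nat.le_induction with
  | base => exact List.prefix_rfl
  | succ i' hle ih =>
    refine ih.trans ?_
    have hFrom := c.bld_from i' 1 le_rfl (c.ni_pos (i' + 1))
    have := (firstPiece_prefix hFrom.1).1
    rwa [c.bld_start i', c.bld_word i' 1 le_rfl (c.ni_pos (i' + 1))] at this

lemma occursInInf_of_UU {V : ℕ → Bool} (c : RankConstruction n) (hlim : c.HasLimit V)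
    {i : ℕ} {u : Word} (hu : u ∈ UU c i) : OccursInInf u V := by
  have hinf : u <:+: c.wd (i + KK c i + 1) 1 := by
    have h1 : u ∈ (compBld c i (KK c i) (c.wd (i + KK c i + 1) 1)).pieces := hu
    have h2 := mem_pieces_infix h1
    rwa [compBld_word c i (KK c i) _ (wd1_mem_level c _)] at h2
  exact occursInInf_of_infix hinf (hlim.1 _)

end Constr
/-! ### Building rank constructions, and properness implies density -/

section Main1
open List

lemma mk_construction (N : ℕ) (hN : 1 ≤ N) (T : ℕ → Set Word) (top : ℕ → Word)
    (bldF : ℕ → Word → Building)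
    (hT0 : T 0 = {[false]})
    (hfin : ∀ t, (T t).Finite) (hcard : ∀ t, (T t).ncard ≤ N)
    (hFF : ∀ t, T t ⊆ FF)
    (htop : ∀ t, top t ∈ T t)
    (hfrom : ∀ t v, v ∈ T (t + 1) → (bldF t v).FromSet (T t))
    (hword : ∀ t v, v ∈ T (t + 1) → (bldF t v).word = v)
    (hstart : ∀ t, (bldF t (top (t + 1))).firstPiece = top t) :
    ∃ c' : RankConstruction N, (∀ t, c'.ni t = N) ∧ (∀ t, c'.wd t 1 = top t) ∧
      (∀ t, levelSet c'.ni c'.wd t = T t) ∧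
      (∀ t j, 1 ≤ j → j ≤ N → c'.bld t j = bldF t (c'.wd (t + 1) j)) := by
  choose e he1 hemem hesurj using fun t => exists_enum (hfin t) (htop t) (hcard t)
  have hlevel : ∀ t, levelSet (fun _ => N) (fun t j => e t j) t = T t := by
    intro t
    apply Set.Subset.antisymm
    · rintro w ⟨j, h1, h2, rfl⟩
      exact hemem t j h1 h2
    · intro v hv
      obtain ⟨j, h1, h2, h3⟩ := hesurj t v hv
      exact ⟨j, h1, h2, h3⟩
  refine ⟨⟨fun _ => N, fun t j => e t j, fun t j => bldF t (e (t + 1) j),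
    fun _ => hN, fun _ => le_rfl, ?_, ?_, ?_, ?_, ?_⟩, fun _ => rfl, fun t => he1 t, hlevel, ?_⟩
  · intro i j h1 h2
    exact hFF i (hemem i j h1 h2)
  · intro j h1 h2
    have := hemem 0 j h1 h2
    rw [hT0, Set.mem_singleton_iff] at this
    exact this
  · intro i j h1 h2
    rw [hlevel i]
    exact hfrom i _ (hemem (i + 1) j h1 h2)
  · intro i j h1 h2
    exact hword i _ (hemem (i + 1) j h1 h2)
  · intro i
    show (bldF i (e (i + 1) 1)).firstPiece = e i 1
    rw [he1 (i + 1), hstart i]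
    exact (he1 i).symm
  · intro t j _ _
    rfl

/-- Properness implies all non-`1^∞` orbits are dense. -/
lemma proper_dense {n : ℕ} {V : ℕ → Bool} (c : RankConstruction n) (hlim : c.HasLimit V)
    (hprop : c.Proper) {X : Set (ℤ → Bool)} (hXV : X = XV V) :
    ∀ x ∈ X, x ≠ (fun _ => true) → X ⊆ closure (sorbit x) := by
  intro x hx hne y hy
  obtain ⟨k₀, hk₀⟩ : ∃ k₀ : ℤ, x k₀ = false := by
    by_contra h
    push_neg at h
    exact hne (funext fun k => by have := h k; revert this; cases x k <;> simp)
  have cover : ∀ J p, V p = false → ∃ v ∈ levelSet c.ni c.wd J, ∃ q,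
      OccursAtInf v V q ∧ q ≤ p ∧ p < q + v.length := by
    intro J p hp
    obtain ⟨i0, hi0⟩ := hlim.2 (p + 1)
    set m := J + (i0 + p) + 1 with hm
    have hmlen : p < (c.wd m 1).length := by
      have h1 : i0 ≤ m := by omega
      have := (wd1_prefix c h1).length_le
      omega
    set b := compBld c J (i0 + p) (c.wd m 1) with hb
    have hword : b.word = c.wd m 1 := compBld_word c J _ _ (wd1_mem_level c m)
    have hk : p < (assemble b.pairs b.last).length := by
      rw [← Building.word_eq, hword]; exact hmlen
    have hfalse : (assemble b.pairs b.last).getD p false = false := by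
      rw [← Building.word_eq, hword, hlim.1 m p hmlen]
      exact hp
    obtain ⟨v, hv, l₁, l₂, heq, hle, hlt⟩ := assemble_cover b.pairs b.last p hk hfalse
    have hvlev : v ∈ levelSet c.ni c.wd J :=
      (compBld_from c J _ _ (wd1_mem_level c m)).2 v hv
    have hlen2 : l₁.length + v.length ≤ (c.wd m 1).length := by
      have := congrArg List.length heq
      rw [← Building.word_eq, hword] at this
      simp only [List.length_append] at this
      omega
    refine ⟨v, hvlev, l₁.length, ?_, hle, hlt⟩
    intro t ht
    have hmid := getD_middle l₁ v l₂ ht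
    rw [← hmid, ← heq, ← Building.word_eq, hword]
    exact hlim.1 m (l₁.length + t) (by omega)
  have sub1 : ∀ J v, v ∈ levelSet c.ni c.wd (J + 1) → c.wd J 1 <:+: v := by
    intro J v hv
    obtain ⟨j, h1, h2, rfl⟩ := hv
    have hmem := hprop.2 J j h1 h2 (c.wd J 1) (wd1_mem_level c J)
    have h3 := mem_pieces_infix hmem
    rwa [c.bld_word J j h1 h2] at h3
  have hXocc : ∀ J, OccursInBi (c.wd J 1) x := by
    intro J
    set L := 1 + (Finset.Icc 1 n).sup (fun j => (c.wd (J + 1) j).length) with hL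
    have hLb : ∀ v ∈ levelSet c.ni c.wd (J + 1), v.length ≤ L := by
      rintro v ⟨j, h1, h2, rfl⟩
      have : (c.wd (J + 1) j).length
          ≤ (Finset.Icc 1 n).sup (fun j => (c.wd (J + 1) j).length) :=
        Finset.le_sup (f := fun j => (c.wd (J + 1) j).length)
          (Finset.mem_Icc.mpr ⟨h1, le_trans h2 (c.ni_le _)⟩)
      omega
    set u0 := win x (k₀ - L) (2 * L + 1) with hu0
    have hu0V : OccursInInf u0 V := by
      rw [hXV] at hx
      exact hx u0 ⟨k₀ - L, occursAtBi_win _ _ _⟩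
    obtain ⟨p, hpocc⟩ := hu0V
    have hcenter : V (p + L) = false := by
      have h := hpocc L (by rw [hu0, win_length]; omega)
      rw [win_getD (by omega)] at h
      rw [← h, show k₀ - (L : ℤ) + L = k₀ by ring, hk₀]
    obtain ⟨v, hvlev, q, hvocc, hq1, hq2⟩ := cover (J + 1) (p + L) hcenter
    have hvL : v.length ≤ L := hLb v hvlev
    have hvx : OccursInBi v x := by
      refine ⟨(k₀ - L) + ((q - p : ℕ) : ℤ), fun t ht => ?_⟩
      have h2 := occursAtBi_win x (k₀ - L) (2 * L + 1) ((q - p) + t)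
        (by rw [win_length]; omega)
      have h3 := hpocc ((q - p) + t) (by rw [hu0, win_length]; omega)
      have h4 := hvocc t ht
      rw [h4]
      have he : p + ((q - p) + t) = q + t := by omega
      rw [he] at h3
      rw [← h3]
      show u0.getD ((q - p) + t) false = x (k₀ - ↑L + ↑(q - p) + ↑t)
      rw [h2]
      congr 1
      push_cast
      ring
    exact occursInBi_of_infix (sub1 J v hvlev) hvx
  apply mem_closure_of_windows
  intro N
  set uy := win y (-(N : ℤ)) (2 * N + 1) with huy
  have hyV : OccursInInf uy V := by
    rw [hXV] at hy
    exact hy uy ⟨-(N : ℤ), occursAtBi_win _ _ _⟩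
  obtain ⟨p, hp⟩ := hyV
  obtain ⟨i1, hi1⟩ := hlim.2 (p + (2 * N + 1))
  have hpre : uy <:+: c.wd i1 1 :=
    infix_of_occursAtInf hp (hlim.1 i1) (by rw [huy, win_length]; omega)
  have hx1 : OccursInBi uy x := occursInBi_of_infix hpre (hXocc i1)
  obtain ⟨b, hb⟩ := hx1
  refine ⟨fun k => x (k + (b + N)), ⟨b + N, rfl⟩, ?_⟩
  intro k hk
  have habs := abs_le.mp hk
  have h1 := hb (k + (N : ℤ)).toNat (by rw [huy, win_length]; omega)
  have h3 := occursAtBi_win y (-(N : ℤ)) (2 * N + 1) (k + (N : ℤ)).toNat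
    (by rw [win_length]; omega)
  rw [huy] at h1
  rw [h1] at h3
  have h2 : (((k + (N : ℤ)).toNat : ℤ)) = k + N := Int.toNat_of_nonneg (by omega)
  rw [h2] at h3
  have e1 : b + (k + (N : ℤ)) = k + (b + N) := by ring
  have e2 : -(N : ℤ) + (k + N) = k := by ring
  rw [e1, e2] at h3
  exact h3

end Main1
/-! ### Density implies properness -/

section Main2
open List

lemma prefix_getD {l l' : Word} (h : l <+: l') {t : ℕ} (ht : t < l.length) :
    l.getD t false = l'.getD t false := by
  rw [List.getD_eq_getElem _ _ ht, List.getD_eq_getElem _ _ (lt_of_lt_of_le ht h.length_le),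
    h.getElem ht]

lemma exists_zero_decomp {v : Word} (hFF : v ∈ FF) (h2 : 2 ≤ v.length) :
    ∃ b : Building, b.FromSet {[false]} ∧ b.word = v ∧ b.firstPiece = [false] :=
  exists_zero_decomp_aux v.length v le_rfl hFF h2

open scoped Classical in
/-- A canonical decomposition into `[false]`-pieces. -/
noncomputable def zdec (v : Word) : Building :=
  if h : ∃ b : Building, b.FromSet {[false]} ∧ b.word = v ∧ b.firstPiece = [false]
  then h.choose else ⟨[], []⟩

lemma zdec_spec {v : Word} (hFF : v ∈ FF) (h2 : 2 ≤ v.length) :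
    (zdec v).FromSet {[false]} ∧ (zdec v).word = v ∧ (zdec v).firstPiece = [false] := by
  rw [zdec, dif_pos (exists_zero_decomp hFF h2)]
  exact (exists_zero_decomp hFF h2).choose_spec

/-- Density of nontrivial orbits implies existence of a proper construction. -/
lemma dense_proper {n : ℕ} (hn : 1 ≤ n) {X : Set (ℤ → Bool)} (hrank : SymbRankEq X n)
    (hdense : ∀ x ∈ X, x ≠ (fun _ => true) → X ⊆ closure (sorbit x)) :
    ∀ V : ℕ → Bool, HasRankConstr V n → ¬ HasRankConstr V (n - 1) → X = XV V →
      ∃ c' : RankConstruction n, c'.HasLimit V ∧ c'.Proper := by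
  intro V hV _ hXV
  obtain ⟨c, hlim⟩ := hV
  by_cases H1 : ∀ i₀, ∃ k, ∀ v ∈ UU c (i₀ + k + 1), ∀ w ∈ UU c i₀,
      w ∈ (compBld c i₀ k v).pieces
  · -- Case 1: telescope to a proper construction
    choose kch hkch using H1
    set idx : ℕ → ℕ := fun t => Nat.rec 0 (fun _ prev => prev + kch prev + 1) t with hidx
    have hidxge : ∀ t, t ≤ idx t := by
      intro t
      induction t with
      | zero => omega
      | succ t ih =>
        have : idx (t + 1) = idx t + kch (idx t) + 1 := rfl
        omega
    obtain ⟨c', hni, hwd1, hlev, hbld⟩ := mk_construction n hn (fun t => UU c (idx t))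
      (fun t => c.wd (idx t) 1) (fun t v => compBld c (idx t) (kch (idx t)) v)
      (UU_zero c)
      (fun _ => UU_fin c _) (fun _ => UU_ncard c _)
      (fun _ => (UU_sub c _).trans (level_sub_FF c _))
      (fun _ => wd1_mem_UU c _)
      (fun t v hv => ⟨(compBld_from c (idx t) (kch (idx t)) v (UU_sub c _ hv)).1,
        fun u hu => UU_comp_pieces c (kch (idx t)) (idx t) v hv u hu⟩)
      (fun t v hv => compBld_word c (idx t) (kch (idx t)) v (UU_sub c _ hv))
      (fun t => compBld_first c (idx t) (kch (idx t)))
    refine ⟨c', ⟨?_, ?_⟩, hni, ?_⟩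
    · intro t
      rw [hwd1 t]
      exact hlim.1 (idx t)
    · intro m
      refine ⟨m, ?_⟩
      rw [hwd1 m]
      have h1 := wd1_len_ge c (idx m)
      have h2 := hidxge m
      omega
    · intro t j h1 h2
      have hh2 : j ≤ n := by rw [hni (t + 1)] at h2; exact h2
      rw [hbld t j h1 hh2]
      intro w hw
      rw [hlev t] at hw
      have hmem : c'.wd (t + 1) j ∈ UU c (idx (t + 1)) := by
        rw [← hlev (t + 1)]
        exact ⟨j, h1, h2, rfl⟩
      exact hkch (idx t) (c'.wd (t + 1) j) hmem w hw
  · -- Case 2: contradiction with the symbolic rank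
    push_neg at H1
    obtain ⟨i₀, hH⟩ := H1
    exfalso
    obtain ⟨w, hwUU, hinf⟩ : ∃ w ∈ UU c i₀,
        {k | ∃ v ∈ UU c (i₀ + k + 1), w ∉ (compBld c i₀ k v).pieces}.Infinite := by
      by_contra hcon
      push_neg at hcon
      have hfin : (⋃ w ∈ UU c i₀,
          {k | ∃ v ∈ UU c (i₀ + k + 1), w ∉ (compBld c i₀ k v).pieces}).Finite :=
        (UU_fin c i₀).biUnion (fun w hw => hcon w hw)
      have huniv : (Set.univ : Set ℕ) ⊆ ⋃ w ∈ UU c i₀,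
          {k | ∃ v ∈ UU c (i₀ + k + 1), w ∉ (compBld c i₀ k v).pieces} := by
        intro k _
        obtain ⟨v, hv, w, hw, hnw⟩ := hH k
        exact Set.mem_biUnion hw ⟨v, hv, hnw⟩
      exact Set.infinite_univ (hfin.subset huniv)
    set D : ℕ → Set Word :=
      fun k => {v | v ∈ UU c (i₀ + k + 1) ∧ w ∉ (compBld c i₀ k v).pieces} with hD
    have hDfin : ∀ k, (D k).Finite := fun k => (UU_fin c _).subset (fun v hv => hv.1)
    have hdesc : ∀ k v, v ∈ D (k + 1) → ∀ u' ∈ (chosen c (i₀ + k + 1) v).pieces, u' ∈ D k := by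
      intro k v hv u' hu'
      refine ⟨UU_pieces c hv.1 u' hu', ?_⟩
      intro hbad
      apply hv.2
      rw [compBld_succ, subst_pieces, List.mem_flatMap]
      exact ⟨u', hu', hbad⟩
    have hDne : ∀ k, (D k).Nonempty := by
      have hstepne : ∀ k, (D (k + 1)).Nonempty → (D k).Nonempty := by
        rintro k ⟨v, hv⟩
        exact ⟨_, hdesc k v hv _ (firstPiece_mem _)⟩
      have hdown : ∀ d k, (D (k + d)).Nonempty → (D k).Nonempty := by
        intro d
        induction d with
        | zero => intro k h; exact h
        | succ d ih => intro k h; exact ih k (hstepne (k + d) h)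
      intro k
      obtain ⟨k', hk', hlt⟩ := hinf.exists_gt k
      obtain ⟨v, hv, hnw⟩ := hk'
      refine hdown (k' - k) k ?_
      rw [show k + (k' - k) = k' from by omega]
      exact ⟨v, hv, hnw⟩
    obtain ⟨u, hu, hfu⟩ := konig D hDfin hDne
      (fun k v => (chosen c (i₀ + k + 1) v).firstPiece)
      (fun k v hv => hdesc k v hv _ (firstPiece_mem _))
    have huUU : ∀ k, u k ∈ UU c (i₀ + k + 1) := fun k => (hu k).1
    have hulev : ∀ k, u k ∈ levelSet c.ni c.wd (i₀ + k + 1) := fun k => UU_sub c _ (huUU k)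
    have huFF : ∀ k, u k ∈ FF := fun k => level_sub_FF c _ (hulev k)
    have hupre : ∀ k, u k <+: u (k + 1) ∧ (u k).length < (u (k + 1)).length := by
      intro k
      have hulev' : u (k + 1) ∈ levelSet c.ni c.wd ((i₀ + k + 1) + 1) := hulev (k + 1)
      have hfrom := chosen_from c hulev'
      have h1 := firstPiece_prefix hfrom.1
      have hword := chosen_word c hulev'
      have hlast : (chosen c (i₀ + k + 1) (u (k + 1))).last ∈ FF :=
        level_sub_FF c _ (hfrom.2 _ (lastPiece_mem _))
      have hlen := FF_length_pos hlast
      rw [hword, hfu k] at h1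
      exact ⟨h1.1, by have := h1.2; omega⟩
    have hulen : ∀ k, k + 1 ≤ (u k).length := by
      intro k
      induction k with
      | zero => exact FF_length_pos (huFF 0)
      | succ k ih => have := (hupre k).2; omega
    have huchain : ∀ {a b : ℕ}, a ≤ b → u a <+: u b := by
      intro a b hab
      induction b, hab using Nat.le_induction with
      | base => exact List.prefix_rfl
      | succ b hb ih => exact ih.trans (hupre b).1
    set V2 : ℕ → Bool := fun t => (u (t + 1)).getD t false with hV2
    have hV2ext : ∀ k, InfExtends V2 (u k) := by
      intro k t ht
      show (u k).getD t false = (u (t + 1)).getD t false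
      rcases le_total k (t + 1) with h | h
      · exact prefix_getD (huchain h) ht
      · exact (prefix_getD (huchain h) (by have := hulen (t + 1); omega)).symm
    have hV2zero : ∀ N, ∃ p, N ≤ p ∧ V2 p = false := by
      intro N
      refine ⟨(u (N + 1)).length - 1, by have := hulen (N + 1); omega, ?_⟩
      have hl : (u (N + 1)).length - 1 < (u (N + 1)).length := by
        have := hulen (N + 1); omega
      have hext := hV2ext (N + 1) _ hl
      rw [← hext]
      exact FF_getD_last (huFF (N + 1))
    obtain ⟨x, hx0, hxV2⟩ := exists_x_of_zeros V2 hV2zero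
    have hV2V : ∀ s : Word, OccursInInf s V2 → OccursInInf s V := by
      intro s hs
      obtain ⟨p, hp⟩ := hs
      have hsinf : s <:+: u (p + s.length) :=
        infix_of_occursAtInf hp (hV2ext _) (by have := hulen (p + s.length); omega)
      exact occursInInf_trans hsinf (occursInInf_of_UU c hlim (huUU (p + s.length)))
    have hxX : x ∈ X := by
      rw [hXV]
      intro s hs
      exact hV2V s (hxV2 s hs)
    have hxne : x ≠ (fun _ => true) := by
      intro h
      have := congrFun h 0
      rw [hx0] at this
      simp at this
    have hsubX := hdense x hxX hxne
    have hXeq : X = XV V2 := by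
      apply Set.Subset.antisymm
      · intro y hy s hs
        exact hxV2 s (occursInBi_of_closure (hsubX hy) hs)
      · intro z hz
        rw [hXV]
        intro s hs
        exact hV2V s (hz s hs)
    set m₁ := KK c i₀ with hm₁
    have hnotin : ∀ k, m₁ ≤ k → c.wd (i₀ + k + 1) 1 ∉ D k := by
      intro k hk hmem
      apply hmem.2
      show w ∈ UsedIn c i₀ k
      rw [UU_eq c i₀ hk]
      exact hwUU
    have hn2 : 2 ≤ n := by
      have h2 := hnotin m₁ le_rfl
      have hne2 : u m₁ ≠ c.wd (i₀ + m₁ + 1) 1 := fun h => h2 (h ▸ hu m₁)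
      have hpair : ({u m₁, c.wd (i₀ + m₁ + 1) 1} : Set Word) ⊆ UU c (i₀ + m₁ + 1) := by
        intro z hz
        rcases hz with rfl | hz
        · exact huUU m₁
        · rw [Set.mem_singleton_iff] at hz
          subst hz
          exact wd1_mem_UU c _
      have hc1 := Set.ncard_le_ncard hpair (UU_fin c _)
      rw [Set.ncard_pair hne2] at hc1
      have := UU_ncard c (i₀ + m₁ + 1)
      omega
    have hDcard : ∀ k, m₁ ≤ k → (D k).ncard ≤ n - 1 := by
      intro k hk
      have hsub : D k ⊆ UU c (i₀ + k + 1) \ {c.wd (i₀ + k + 1) 1} := by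
        intro v hv
        refine ⟨hv.1, ?_⟩
        rw [Set.mem_singleton_iff]
        intro h
        exact hnotin k hk (h ▸ hv)
      have h1 := Set.ncard_le_ncard hsub ((UU_fin c _).diff)
      rw [Set.ncard_diff_singleton_of_mem (wd1_mem_UU c _)] at h1
      have := UU_ncard c (i₀ + k + 1)
      omega
    obtain ⟨c2, hni2, hwd12, hlev2, hbld2⟩ := mk_construction (n - 1) (by omega)
      (fun t => match t with
        | 0 => ({[false]} : Set Word)
        | (t' + 1) => D (m₁ + t'))
      (fun t => match t with
        | 0 => ([false] : Word)
        | (t' + 1) => u (m₁ + t'))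
      (fun t v => match t with
        | 0 => zdec v
        | (t' + 1) => chosen c (i₀ + (m₁ + t') + 1) v)
      rfl
      (by intro t; cases t with
        | zero => exact Set.finite_singleton _
        | succ t' => exact hDfin _)
      (by intro t; cases t with
        | zero => rw [Set.ncard_singleton]; omega
        | succ t' => exact hDcard (m₁ + t') (by omega))
      (by intro t; cases t with
        | zero =>
          intro v hv
          rw [Set.mem_singleton_iff] at hv
          subst hv
          exact single_false_mem_FF
        | succ t' => exact fun v hv => level_sub_FF c _ (UU_sub c _ hv.1))
      (by intro t; cases t with
        | zero => exact rfl
        | succ t' => exact hu (m₁ + t'))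
      (by intro t v hv; cases t with
        | zero =>
          exact (zdec_spec (level_sub_FF c _ (UU_sub c _ hv.1))
            (level_len_two c (UU_sub c _ hv.1))).1
        | succ t' =>
          exact ⟨(chosen_from c (UU_sub c _ hv.1)).1,
            fun u' hu' => hdesc (m₁ + t') v hv u' hu'⟩)
      (by intro t v hv; cases t with
        | zero =>
          exact (zdec_spec (level_sub_FF c _ (UU_sub c _ hv.1))
            (level_len_two c (UU_sub c _ hv.1))).2.1
        | succ t' => exact chosen_word c (UU_sub c _ hv.1))
      (by intro t; cases t with
        | zero =>
          exact (zdec_spec (level_sub_FF c _ (UU_sub c _ (hu m₁).1))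
            (level_len_two c (UU_sub c _ (hu m₁).1))).2.2
        | succ t' => exact hfu (m₁ + t'))
    have hlim2 : c2.HasLimit V2 := by
      constructor
      · intro t
        rw [hwd12 t]
        cases t with
        | zero =>
          intro k hk
          simp only [List.length_cons, List.length_nil] at hk
          interval_cases k
          have hV20 : V2 0 = false := FF_getD_zero (huFF 1)
          rw [hV20]
          rfl
        | succ t' => exact hV2ext (m₁ + t')
      · intro m
        refine ⟨m + 1, ?_⟩
        rw [hwd12 (m + 1)]
        show m ≤ (u (m₁ + m)).length
        have := hulen (m₁ + m)
        omega
    have hcon : SymbRankLE X (n - 1) := ⟨V2, ⟨c2, hlim2⟩, hXeq⟩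
    have := hrank.2 (n - 1) hcon
    omega

end Main2
/-- Theorem 4.2. For a subshift `X` of symbolic rank `n`, the three
conditions (existence of a proper rank-`n` construction for some/every rank-`n` word
generating `X`, and density of all orbits other than that of `1^ℤ`) are equivalent. -/
theorem statement_6 (n : ℕ) (hn : 1 ≤ n) (X : Set (ℤ → Bool)) (hX : IsSubshift X)
    (hrank : SymbRankEq X n) :
    ((∃ V : ℕ → Bool, HasRankConstr V n ∧ ¬ HasRankConstr V (n - 1) ∧ X = XV V ∧
        ∃ c : RankConstruction n, c.HasLimit V ∧ c.Proper) ↔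
      (∀ x ∈ X, x ≠ (fun _ => true) → X ⊆ closure (sorbit x))) ∧
    ((∀ V : ℕ → Bool, HasRankConstr V n → ¬ HasRankConstr V (n - 1) → X = XV V →
        ∃ c : RankConstruction n, c.HasLimit V ∧ c.Proper) ↔
      (∀ x ∈ X, x ≠ (fun _ => true) → X ⊆ closure (sorbit x))) := by
  have hAtoP : (∃ V : ℕ → Bool, HasRankConstr V n ∧ ¬ HasRankConstr V (n - 1) ∧ X = XV V ∧
      ∃ c : RankConstruction n, c.HasLimit V ∧ c.Proper) →
      (∀ x ∈ X, x ≠ (fun _ => true) → X ⊆ closure (sorbit x)) := by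
    rintro ⟨V, hV, hnot, hXV, c, hclim, hcprop⟩
    exact proper_dense c hclim hcprop hXV
  have hBtoA : (∀ V : ℕ → Bool, HasRankConstr V n → ¬ HasRankConstr V (n - 1) → X = XV V →
      ∃ c : RankConstruction n, c.HasLimit V ∧ c.Proper) →
      (∃ V : ℕ → Bool, HasRankConstr V n ∧ ¬ HasRankConstr V (n - 1) ∧ X = XV V ∧
        ∃ c : RankConstruction n, c.HasLimit V ∧ c.Proper) := by
    intro hB
    obtain ⟨V, hV, hXV⟩ := hrank.1
    have hnot : ¬ HasRankConstr V (n - 1) := by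
      intro h
      have := hrank.2 (n - 1) ⟨V, h, hXV⟩
      omega
    obtain ⟨c, hc⟩ := hB V hV hnot hXV
    exact ⟨V, hV, hnot, hXV, c, hc⟩
  constructor
  · exact ⟨hAtoP, fun hP => hBtoA (dense_proper hn hrank hP)⟩
  · exact ⟨fun hB => hAtoP (hBtoA hB), fun hP => dense_proper hn hrank hP⟩

end SubshiftRank
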